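/- The score minimizes the Target Score Matching loss: for any measurable vector field s : ℝ^d → ℝ^d with all integrals below finite, ∬ ‖s(y) − ∇ log p_X(x)‖² p_X(x) p_W(y − x) dx dy = ∫ ‖s(y) − ∇ log p_Y(y)‖² p_Y(y) dy + ∬ ‖∇ log p_X(x) − ∇ log p_Y(y)‖² p_X(x) p_W(y − x) dx dy; in particular the choice s(y) = ∇ log p_Y(y) minimizes the Target Score Matching loss over all such s. -/

import Mathlib

open MeasureTheory Real

theorem tsm_aux (d : ℕ)
    (ρ : EuclideanSpace ℝ (Fin d) → EuclideanSpace ℝ (Fin d) → ℝ)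
    (hρ_pos : ∀ x y, 0 < ρ x y)
    (hρ_cont : Continuous fun p : EuclideanSpace ℝ (Fin d) × EuclideanSpace ℝ (Fin d) => ρ p.1 p.2)
    (pY : EuclideanSpace ℝ (Fin d) → ℝ)
    (hpY : ∀ y, pY y = ∫ x, ρ x y)
    (a b s : EuclideanSpace ℝ (Fin d) → EuclideanSpace ℝ (Fin d))
    (ha : Measurable a) (hb : Measurable b) (hs : Measurable s)
    (hTSI : ∀ y, b y = ∫ x, (ρ x y / pY y) • a x)
    (hF : Integrable (fun p : EuclideanSpace ℝ (Fin d) × EuclideanSpace ℝ (Fin d) =>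
      ‖s p.2 - a p.1‖ ^ 2 * ρ p.1 p.2))
    (hH : Integrable (fun p : EuclideanSpace ℝ (Fin d) × EuclideanSpace ℝ (Fin d) =>
      ‖b p.2 - a p.1‖ ^ 2 * ρ p.1 p.2)) :
    (∫ p : EuclideanSpace ℝ (Fin d) × EuclideanSpace ℝ (Fin d),
        ‖s p.2 - a p.1‖ ^ 2 * ρ p.1 p.2)
      = (∫ y, ‖s y - b y‖ ^ 2 * pY y)
        + ∫ p : EuclideanSpace ℝ (Fin d) × EuclideanSpace ℝ (Fin d),
            ‖b p.2 - a p.1‖ ^ 2 * ρ p.1 p.2 := by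
  have hd2 : ∀ p : EuclideanSpace ℝ (Fin d) × EuclideanSpace ℝ (Fin d),
      ‖s p.2 - a p.1‖ ^ 2 * ρ p.1 p.2
        = ‖s p.2 - b p.2‖ ^ 2 * ρ p.1 p.2
          + (2 * (inner ℝ (s p.2 - b p.2) (b p.2 - a p.1) : ℝ)) * ρ p.1 p.2
          + ‖b p.2 - a p.1‖ ^ 2 * ρ p.1 p.2 := by
    intro p
    have h : s p.2 - a p.1 = (s p.2 - b p.2) + (b p.2 - a p.1) := by abel
    rw [h, norm_add_sq_real]; ring
  -- measurability of G
  have hG_meas : AEStronglyMeasurable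
      (fun p : EuclideanSpace ℝ (Fin d) × EuclideanSpace ℝ (Fin d) =>
        ‖s p.2 - b p.2‖ ^ 2 * ρ p.1 p.2) volume := by
    exact ((((hs.comp measurable_snd).sub (hb.comp measurable_snd)).norm.pow_const 2).mul
      hρ_cont.measurable).aestronglyMeasurable
  have hG_int : Integrable (fun p : EuclideanSpace ℝ (Fin d) × EuclideanSpace ℝ (Fin d) =>
      ‖s p.2 - b p.2‖ ^ 2 * ρ p.1 p.2) := by
    refine ((hF.const_mul 2).add (hH.const_mul 2)).mono' hG_meas
      (Filter.Eventually.of_forall fun p => ?_)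
    have hρn : (0:ℝ) ≤ ρ p.1 p.2 := (hρ_pos _ _).le
    have h1 : ‖s p.2 - b p.2‖ ≤ ‖s p.2 - a p.1‖ + ‖b p.2 - a p.1‖ := by
      have h2 := norm_sub_le (s p.2 - a p.1) (b p.2 - a p.1)
      have h3 : s p.2 - a p.1 - (b p.2 - a p.1) = s p.2 - b p.2 := by abel
      rwa [h3] at h2
    have h4 : ‖s p.2 - b p.2‖ ^ 2 ≤ 2 * ‖s p.2 - a p.1‖ ^ 2 + 2 * ‖b p.2 - a p.1‖ ^ 2 := by
      nlinarith [norm_nonneg (s p.2 - b p.2), norm_nonneg (s p.2 - a p.1),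
        norm_nonneg (b p.2 - a p.1), sq_nonneg (‖s p.2 - a p.1‖ - ‖b p.2 - a p.1‖)]
    have h5 := mul_le_mul_of_nonneg_right h4 hρn
    simp only [Pi.add_apply]
    rw [Real.norm_eq_abs, abs_of_nonneg (by positivity)]
    nlinarith [h5]
  have hCeq : (fun p : EuclideanSpace ℝ (Fin d) × EuclideanSpace ℝ (Fin d) =>
      (2 * (inner ℝ (s p.2 - b p.2) (b p.2 - a p.1) : ℝ)) * ρ p.1 p.2)
      = fun p => ‖s p.2 - a p.1‖ ^ 2 * ρ p.1 p.2 - ‖s p.2 - b p.2‖ ^ 2 * ρ p.1 p.2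
          - ‖b p.2 - a p.1‖ ^ 2 * ρ p.1 p.2 := by
    funext p; have := hd2 p; linarith
  have hC_int : Integrable (fun p : EuclideanSpace ℝ (Fin d) × EuclideanSpace ℝ (Fin d) =>
      (2 * (inner ℝ (s p.2 - b p.2) (b p.2 - a p.1) : ℝ)) * ρ p.1 p.2) := by
    rw [hCeq]; exact (hF.sub hG_int).sub hH
  -- value of ∫ G
  have hGval : (∫ p : EuclideanSpace ℝ (Fin d) × EuclideanSpace ℝ (Fin d),
      ‖s p.2 - b p.2‖ ^ 2 * ρ p.1 p.2) = ∫ y, ‖s y - b y‖ ^ 2 * pY y := by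
    have hG_int' := hG_int
    rw [Measure.volume_eq_prod] at hG_int'
    rw [Measure.volume_eq_prod, integral_prod_symm _ hG_int']
    refine integral_congr_ae (Filter.Eventually.of_forall fun y => ?_)
    show (∫ x, ‖s y - b y‖ ^ 2 * ρ x y) = _
    rw [integral_const_mul, ← hpY]
  -- value of ∫ C
  have hCval : (∫ p : EuclideanSpace ℝ (Fin d) × EuclideanSpace ℝ (Fin d),
      (2 * (inner ℝ (s p.2 - b p.2) (b p.2 - a p.1) : ℝ)) * ρ p.1 p.2) = 0 := by
    have hC_int' := hC_int
    have hG_int' := hG_int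
    have hH' := hH
    rw [Measure.volume_eq_prod] at hC_int' hG_int' hH'
    rw [Measure.volume_eq_prod, integral_prod_symm _ hC_int']
    have hae : ∀ᵐ y : EuclideanSpace ℝ (Fin d),
        (∫ x, (2 * (inner ℝ (s y - b y) (b y - a x) : ℝ)) * ρ x y) = 0 := by
      filter_upwards [hG_int'.prod_left_ae, hH'.prod_left_ae] with y hGy hHy
      by_cases hu : s y - b y = 0
      · simp [hu]
      · have hc : (0:ℝ) < ‖s y - b y‖ ^ 2 := pow_pos (norm_pos_iff.mpr hu) 2
        have hGy' : Integrable (fun x => ‖s y - b y‖ ^ 2 * ρ x y) := hGy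
        have hρy_int : Integrable (fun x => ρ x y) := by
          have h2 := hGy'.const_mul (‖s y - b y‖ ^ 2)⁻¹
          simpa [← mul_assoc, inv_mul_cancel₀ hc.ne'] using h2
        have hρyc : Continuous fun x => ρ x y :=
          hρ_cont.comp (continuous_id.prodMk continuous_const)
        have hpY_pos : 0 < pY y := by
          rw [hpY y, integral_pos_iff_support_of_nonneg (fun x => (hρ_pos x y).le) hρy_int]
          have hsupp : Function.support (fun x => ρ x y) = Set.univ :=
            Set.eq_univ_of_forall fun x => (hρ_pos x y).ne'
          rw [hsupp]
          exact isOpen_univ.measure_pos volume ⟨0, trivial⟩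
        have hHy' : Integrable (fun x => ‖b y - a x‖ ^ 2 * ρ x y) := hHy
        have hv_meas : AEStronglyMeasurable (fun x => ρ x y • (b y - a x)) volume :=
          (hρyc.measurable.smul (measurable_const.sub ha)).aestronglyMeasurable
        have hv_int : Integrable (fun x => ρ x y • (b y - a x)) := by
          refine Integrable.mono' ((hρy_int.add hHy').div_const 2) hv_meas
            (Filter.Eventually.of_forall fun x => ?_)
          simp only [Pi.add_apply]
          rw [norm_smul, Real.norm_eq_abs, abs_of_nonneg (hρ_pos x y).le]
          nlinarith [mul_nonneg (hρ_pos x y).le (sq_nonneg (‖b y - a x‖ - 1))]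
        have hρb_int : Integrable (fun x => ρ x y • b y) := hρy_int.smul_const (b y)
        have hρa_int : Integrable (fun x => ρ x y • a x) :=
          (hρb_int.sub hv_int).congr (Filter.Eventually.of_forall fun x => by
            show ρ x y • b y - ρ x y • (b y - a x) = ρ x y • a x
            rw [smul_sub]; abel)
        have hkey : (∫ x, ρ x y • a x) = pY y • b y := by
          have h1 := hTSI y
          have h2 : (fun x => (ρ x y / pY y) • a x)
              = fun x => (pY y)⁻¹ • (ρ x y • a x) := by
            funext x; rw [smul_smul, div_eq_inv_mul]
          rw [h2, integral_smul] at h1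
          rw [h1, smul_smul, mul_inv_cancel₀ hpY_pos.ne', one_smul]
        have hvzero : (∫ x, ρ x y • (b y - a x)) = 0 := by
          have h3 : (fun x => ρ x y • (b y - a x)) = fun x => ρ x y • b y - ρ x y • a x := by
            funext x; rw [smul_sub]
          have e5 : (∫ x, (ρ x y • b y - ρ x y • a x))
              = (∫ x, ρ x y • b y) - ∫ x, ρ x y • a x := integral_sub hρb_int hρa_int
          have e6 : (∫ x, ρ x y • b y) = (∫ x, ρ x y) • b y := integral_smul_const _ _
          rw [h3, e5, e6, ← hpY y, hkey, sub_self]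
        calc (∫ x, (2 * (inner ℝ (s y - b y) (b y - a x) : ℝ)) * ρ x y)
            = ∫ x, 2 * (inner ℝ (s y - b y) (ρ x y • (b y - a x)) : ℝ) := by
              refine integral_congr_ae (Filter.Eventually.of_forall fun x => ?_)
              show (2 * (inner ℝ (s y - b y) (b y - a x) : ℝ)) * ρ x y
                = 2 * (inner ℝ (s y - b y) (ρ x y • (b y - a x)) : ℝ)
              rw [real_inner_smul_right]; ring
          _ = 2 * (inner ℝ (s y - b y) (∫ x, ρ x y • (b y - a x)) : ℝ) := by
              rw [integral_const_mul, integral_inner hv_int]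
          _ = 0 := by rw [hvzero, inner_zero_right, mul_zero]
    calc (∫ y, ∫ x, (2 * (inner ℝ (s y - b y) (b y - a x) : ℝ)) * ρ x y)
        = ∫ (_ : EuclideanSpace ℝ (Fin d)), (0:ℝ) := integral_congr_ae hae
      _ = 0 := by simp
  -- assemble
  have hsum : (∫ p : EuclideanSpace ℝ (Fin d) × EuclideanSpace ℝ (Fin d),
      ‖s p.2 - a p.1‖ ^ 2 * ρ p.1 p.2)
      = (∫ p : EuclideanSpace ℝ (Fin d) × EuclideanSpace ℝ (Fin d),
          ‖s p.2 - b p.2‖ ^ 2 * ρ p.1 p.2)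
        + (∫ p : EuclideanSpace ℝ (Fin d) × EuclideanSpace ℝ (Fin d),
            (2 * (inner ℝ (s p.2 - b p.2) (b p.2 - a p.1) : ℝ)) * ρ p.1 p.2)
        + ∫ p : EuclideanSpace ℝ (Fin d) × EuclideanSpace ℝ (Fin d),
            ‖b p.2 - a p.1‖ ^ 2 * ρ p.1 p.2 := by
    have e0 : (∫ p : EuclideanSpace ℝ (Fin d) × EuclideanSpace ℝ (Fin d),
        ‖s p.2 - a p.1‖ ^ 2 * ρ p.1 p.2)
        = ∫ p : EuclideanSpace ℝ (Fin d) × EuclideanSpace ℝ (Fin d),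
            (‖s p.2 - b p.2‖ ^ 2 * ρ p.1 p.2
              + (2 * (inner ℝ (s p.2 - b p.2) (b p.2 - a p.1) : ℝ)) * ρ p.1 p.2
              + ‖b p.2 - a p.1‖ ^ 2 * ρ p.1 p.2) :=
      integral_congr_ae (Filter.Eventually.of_forall hd2)
    have e2 : (∫ p : EuclideanSpace ℝ (Fin d) × EuclideanSpace ℝ (Fin d),
        (‖s p.2 - b p.2‖ ^ 2 * ρ p.1 p.2
          + (2 * (inner ℝ (s p.2 - b p.2) (b p.2 - a p.1) : ℝ)) * ρ p.1 p.2
          + ‖b p.2 - a p.1‖ ^ 2 * ρ p.1 p.2))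
        = (∫ p : EuclideanSpace ℝ (Fin d) × EuclideanSpace ℝ (Fin d),
            (‖s p.2 - b p.2‖ ^ 2 * ρ p.1 p.2
              + (2 * (inner ℝ (s p.2 - b p.2) (b p.2 - a p.1) : ℝ)) * ρ p.1 p.2))
          + ∫ p : EuclideanSpace ℝ (Fin d) × EuclideanSpace ℝ (Fin d),
              ‖b p.2 - a p.1‖ ^ 2 * ρ p.1 p.2 := integral_add (hG_int.add hC_int) hH
    have e1 : (∫ p : EuclideanSpace ℝ (Fin d) × EuclideanSpace ℝ (Fin d),
        (‖s p.2 - b p.2‖ ^ 2 * ρ p.1 p.2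
          + (2 * (inner ℝ (s p.2 - b p.2) (b p.2 - a p.1) : ℝ)) * ρ p.1 p.2))
        = (∫ p : EuclideanSpace ℝ (Fin d) × EuclideanSpace ℝ (Fin d),
            ‖s p.2 - b p.2‖ ^ 2 * ρ p.1 p.2)
          + ∫ p : EuclideanSpace ℝ (Fin d) × EuclideanSpace ℝ (Fin d),
              (2 * (inner ℝ (s p.2 - b p.2) (b p.2 - a p.1) : ℝ)) * ρ p.1 p.2 :=
      integral_add hG_int hC_int
    rw [e0, e2, e1]
  rw [hsum, hGval, hCval, add_zero]

/-- **The score minimizes the TSM loss**: the TSM loss decomposes as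
`ℓ_TSM(s) = ∫ ‖s(y) - ∇ log p_Y(y)‖² p_Y(y) dy
  + ∬ ‖∇ log p_X(x) - ∇ log p_Y(y)‖² p_X(x) p_W(y-x) dx dy`,
and in particular `s = ∇ log p_Y` minimizes the TSM loss. -/
theorem score_minimizes_tsm
    (d : ℕ) (hd : 1 ≤ d)
    (pX pW : EuclideanSpace ℝ (Fin d) → ℝ)
    (hpX_pos : ∀ x, 0 < pX x) (hpW_pos : ∀ w, 0 < pW w)
    (hpX_diff : ContDiff ℝ 1 pX) (hpW_diff : ContDiff ℝ 1 pW)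
    (hpX_prob : ∫ x, pX x = 1) (hpW_prob : ∫ w, pW w = 1)
    (pY : EuclideanSpace ℝ (Fin d) → ℝ)
    (hpY : ∀ y, pY y = ∫ x, pX x * pW (y - x))
    (pXgY : EuclideanSpace ℝ (Fin d) → EuclideanSpace ℝ (Fin d) → ℝ)
    (hpXgY : ∀ x y, pXgY x y = pX x * pW (y - x) / pY y)
    -- Target Score Identity, assumed to hold (differentiation under the integral sign)
    (hTSI : ∀ y, gradient (fun y' => Real.log (pY y')) y
      = ∫ x, pXgY x y • gradient (fun x' => Real.log (pX x')) x)
    (s : EuclideanSpace ℝ (Fin d) → EuclideanSpace ℝ (Fin d))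
    (hs : Measurable s)
    (hTSM : Integrable (fun p : EuclideanSpace ℝ (Fin d) × EuclideanSpace ℝ (Fin d) =>
      ‖s p.2 - gradient (fun x' => Real.log (pX x')) p.1‖ ^ 2 * (pX p.1 * pW (p.2 - p.1))))
    (hL2 : Integrable (fun y =>
      ‖s y - gradient (fun y' => Real.log (pY y')) y‖ ^ 2 * pY y))
    (hVar : Integrable (fun p : EuclideanSpace ℝ (Fin d) × EuclideanSpace ℝ (Fin d) =>
      ‖gradient (fun x' => Real.log (pX x')) p.1
        - gradient (fun y' => Real.log (pY y')) p.2‖ ^ 2 * (pX p.1 * pW (p.2 - p.1))))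
    (hTSMscore : Integrable (fun p : EuclideanSpace ℝ (Fin d) × EuclideanSpace ℝ (Fin d) =>
      ‖gradient (fun y' => Real.log (pY y')) p.2
        - gradient (fun x' => Real.log (pX x')) p.1‖ ^ 2 * (pX p.1 * pW (p.2 - p.1)))) :
    (∫ p : EuclideanSpace ℝ (Fin d) × EuclideanSpace ℝ (Fin d),
        ‖s p.2 - gradient (fun x' => Real.log (pX x')) p.1‖ ^ 2 * (pX p.1 * pW (p.2 - p.1)))
      = (∫ y, ‖s y - gradient (fun y' => Real.log (pY y')) y‖ ^ 2 * pY y)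
        + (∫ p : EuclideanSpace ℝ (Fin d) × EuclideanSpace ℝ (Fin d),
            ‖gradient (fun x' => Real.log (pX x')) p.1
              - gradient (fun y' => Real.log (pY y')) p.2‖ ^ 2 * (pX p.1 * pW (p.2 - p.1)))
    ∧ (∫ p : EuclideanSpace ℝ (Fin d) × EuclideanSpace ℝ (Fin d),
        ‖gradient (fun y' => Real.log (pY y')) p.2
          - gradient (fun x' => Real.log (pX x')) p.1‖ ^ 2 * (pX p.1 * pW (p.2 - p.1)))
      ≤ ∫ p : EuclideanSpace ℝ (Fin d) × EuclideanSpace ℝ (Fin d),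
          ‖s p.2 - gradient (fun x' => Real.log (pX x')) p.1‖ ^ 2 * (pX p.1 * pW (p.2 - p.1)) := by
  have hmeas_a : Measurable fun x => gradient (fun x' => Real.log (pX x')) x :=
    ((InnerProductSpace.toDual ℝ (EuclideanSpace ℝ (Fin d))).symm.continuous.measurable).comp
      (measurable_fderiv ℝ _)
  have hmeas_b : Measurable fun y => gradient (fun y' => Real.log (pY y')) y :=
    ((InnerProductSpace.toDual ℝ (EuclideanSpace ℝ (Fin d))).symm.continuous.measurable).comp
      (measurable_fderiv ℝ _)
  have hρ_cont : Continuous fun p : EuclideanSpace ℝ (Fin d) × EuclideanSpace ℝ (Fin d) =>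
      pX p.1 * pW (p.2 - p.1) :=
    (hpX_diff.continuous.comp continuous_fst).mul
      (hpW_diff.continuous.comp (continuous_snd.sub continuous_fst))
  have hTSI' : ∀ y, gradient (fun y' => Real.log (pY y')) y
      = ∫ x, ((pX x * pW (y - x)) / pY y) • gradient (fun x' => Real.log (pX x')) x := by
    intro y
    rw [hTSI y]
    refine integral_congr_ae (Filter.Eventually.of_forall fun x => ?_)
    show pXgY x y • gradient (fun x' => Real.log (pX x')) x
      = ((pX x * pW (y - x)) / pY y) • gradient (fun x' => Real.log (pX x')) x
    rw [hpXgY]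
  have key : (∫ p : EuclideanSpace ℝ (Fin d) × EuclideanSpace ℝ (Fin d),
      ‖s p.2 - gradient (fun x' => Real.log (pX x')) p.1‖ ^ 2 * (pX p.1 * pW (p.2 - p.1)))
      = (∫ y, ‖s y - gradient (fun y' => Real.log (pY y')) y‖ ^ 2 * pY y)
        + ∫ p : EuclideanSpace ℝ (Fin d) × EuclideanSpace ℝ (Fin d),
            ‖gradient (fun y' => Real.log (pY y')) p.2
              - gradient (fun x' => Real.log (pX x')) p.1‖ ^ 2 * (pX p.1 * pW (p.2 - p.1)) :=
    tsm_aux d (fun x y => pX x * pW (y - x))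
      (fun x y => mul_pos (hpX_pos x) (hpW_pos (y - x))) hρ_cont pY hpY
      (fun x => gradient (fun x' => Real.log (pX x')) x)
      (fun y => gradient (fun y' => Real.log (pY y')) y) s
      hmeas_a hmeas_b hs hTSI' hTSM hTSMscore
  have hswap : (∫ p : EuclideanSpace ℝ (Fin d) × EuclideanSpace ℝ (Fin d),
      ‖gradient (fun y' => Real.log (pY y')) p.2
        - gradient (fun x' => Real.log (pX x')) p.1‖ ^ 2 * (pX p.1 * pW (p.2 - p.1)))
      = ∫ p : EuclideanSpace ℝ (Fin d) × EuclideanSpace ℝ (Fin d),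
          ‖gradient (fun x' => Real.log (pX x')) p.1
            - gradient (fun y' => Real.log (pY y')) p.2‖ ^ 2 * (pX p.1 * pW (p.2 - p.1)) :=
    integral_congr_ae (Filter.Eventually.of_forall fun p => by
      show ‖gradient (fun y' => Real.log (pY y')) p.2
          - gradient (fun x' => Real.log (pX x')) p.1‖ ^ 2 * (pX p.1 * pW (p.2 - p.1))
        = ‖gradient (fun x' => Real.log (pX x')) p.1
            - gradient (fun y' => Real.log (pY y')) p.2‖ ^ 2 * (pX p.1 * pW (p.2 - p.1))
      rw [norm_sub_rev])
  have h0 : 0 ≤ ∫ y, ‖s y - gradient (fun y' => Real.log (pY y')) y‖ ^ 2 * pY y := by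
    refine integral_nonneg fun y => mul_nonneg (sq_nonneg _) ?_
    rw [hpY y]
    exact integral_nonneg fun x => (mul_pos (hpX_pos x) (hpW_pos (y - x))).le
  refine ⟨?_, ?_⟩
  · rw [key, hswap]
  · rw [key]; linarith
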